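/- Let X ~ Exp(1) and let g(x) = x/(x+1)². Then the variance of the normalized SLNR gain g(X)/E[g(X)] is strictly smaller than the variance of X (which equals 1). -/

import Mathlib

open MeasureTheory Real Set ProbabilityTheory Filter Topology
open scoped NNReal ENNReal

namespace SLNRAux

noncomputable def dens (x : ℝ) : ℝ := if 0 ≤ x then rexp (-x) else 0

lemma dens_nonneg (x : ℝ) : 0 ≤ dens x := by
  unfold dens; split <;> positivity

lemma meas_dens : Measurable dens := by
  unfold dens
  exact Measurable.ite measurableSet_Ici (by fun_prop) measurable_const

lemma expMeasure_one :
    expMeasure 1 = volume.withDensity (fun x => ((Real.toNNReal (dens x) : ℝ≥0) : ℝ≥0∞)) := by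
  have h : (gammaPDF 1 1) = fun x => ((Real.toNNReal (dens x) : ℝ≥0) : ℝ≥0∞) := by
    funext x
    have : gammaPDF 1 1 x = exponentialPDF 1 x := rfl
    rw [this, exponentialPDF_eq]
    simp only [one_mul, dens, ENNReal.ofReal]
  rw [expMeasure, gammaMeasure, h]

lemma integral_expMeasure (f : ℝ → ℝ) :
    ∫ x, f x ∂(expMeasure 1) = ∫ x in Ioi 0, f x * rexp (-x) := by
  rw [expMeasure_one, integral_withDensity_eq_integral_smul (show Measurable fun x => (dens x).toNNReal from measurable_real_toNNReal.comp meas_dens)]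
  have hae : (fun x => (Real.toNNReal (dens x) : ℝ≥0) • f x)
      =ᵐ[volume] (Ioi 0).indicator (fun x => f x * rexp (-x)) := by
    have hsub : {x : ℝ | ¬ ((Real.toNNReal (dens x) : ℝ≥0) • f x
        = (Ioi 0).indicator (fun x => f x * rexp (-x)) x)} ⊆ {0} := by
      intro x hx
      simp only [mem_setOf_eq] at hx
      by_contra hne
      have hne' : x ≠ 0 := by simpa using hne
      rcases lt_or_gt_of_ne hne' with h | h
      · apply hx
        rw [indicator_of_notMem (by simpa using h.le)]
        have : dens x = 0 := by simp [dens, not_le.mpr h]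
        simp [this]
      · apply hx
        rw [indicator_of_mem (by simpa using h)]
        have : dens x = rexp (-x) := by simp [dens, h.le]
        simp [this, NNReal.smul_def, Real.coe_toNNReal _ (exp_pos _).le, mul_comm]
    exact measure_mono_null hsub Real.volume_singleton
  rw [integral_congr_ae hae, integral_indicator measurableSet_Ioi]

lemma hasDerivAt_exp_neg (x : ℝ) : HasDerivAt (fun x : ℝ => rexp (-x)) (-rexp (-x)) x := by
  simpa using ((hasDerivAt_id x).neg).exp

/-- variance integrand for Exp(1) -/
lemma integral_sq_exp : ∫ x in Ioi (0:ℝ), (x - 1) ^ 2 * rexp (-x) = 1 := by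
  have hder : ∀ x ∈ Ici (0:ℝ),
      HasDerivAt (fun x : ℝ => -((x ^ 2 + 1) * rexp (-x))) ((x - 1) ^ 2 * rexp (-x)) x := by
    intro x _
    have h2 : HasDerivAt (fun x : ℝ => x ^ 2 + 1) (2 * x) x := by
      simpa using ((hasDerivAt_pow 2 x).add_const 1)
    have := (h2.mul (hasDerivAt_exp_neg x)).neg
    exact this.congr_deriv (by ring)
  have htend : Tendsto (fun x : ℝ => -((x ^ 2 + 1) * rexp (-x))) atTop (𝓝 0) := by
    have h1 := tendsto_pow_mul_exp_neg_atTop_nhds_zero 2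
    have h2 : Tendsto (fun x : ℝ => rexp (-x)) atTop (𝓝 0) := by
      simpa using Real.tendsto_exp_neg_atTop_nhds_zero
    have := ((h1.add h2).neg)
    simpa [add_mul] using this.congr (by intro x; ring)
  have hint : IntegrableOn (fun x => (x - 1) ^ 2 * rexp (-x)) (Ioi (0:ℝ)) :=
    integrableOn_Ioi_deriv_of_nonneg' hder (fun x _ => by positivity) htend
  rw [integral_Ioi_of_hasDerivAt_of_tendsto' hder hint htend]
  norm_num

/-- integral of a linear function against exp(-x) -/
lemma lin_exp (a b l r : ℝ) :
    ∫ x in l..r, (a + b * x) * rexp (-x)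
      = (a + b + b * l) * rexp (-l) - (a + b + b * r) * rexp (-r) := by
  have hder : ∀ x ∈ uIcc l r,
      HasDerivAt (fun x : ℝ => -((a + b + b * x) * rexp (-x))) ((a + b * x) * rexp (-x)) x := by
    intro x _
    have h2 : HasDerivAt (fun x : ℝ => a + b + b * x) b x := by
      simpa using ((hasDerivAt_id x).const_mul b).const_add (a + b)
    have := (h2.mul (hasDerivAt_exp_neg x)).neg
    exact this.congr_deriv (by ring)
  rw [intervalIntegral.integral_eq_sub_of_hasDerivAt hder
    (Continuous.intervalIntegrable (by continuity) l r)]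
  ring

noncomputable def g (x : ℝ) : ℝ := x / (x + 1) ^ 2

lemma meas_g : Measurable g := by unfold g; fun_prop

lemma g_nonneg {x : ℝ} (hx : 0 ≤ x) : 0 ≤ g x := by
  unfold g; positivity

lemma g_le_quarter {x : ℝ} (hx : 0 ≤ x) : g x ≤ 1 / 4 := by
  unfold g
  rw [div_le_iff₀ (by positivity)]
  nlinarith [sq_nonneg (x - 1)]

lemma integrableOn_g_exp : IntegrableOn (fun x => g x * rexp (-x)) (Ioi (0:ℝ)) := by
  apply Integrable.mono' (g := fun x => (1/4) * rexp (-1 * x))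
    ((exp_neg_integrableOn_Ioi 0 one_pos).const_mul (1/4))
    ((meas_g.mul (by fun_prop)).aestronglyMeasurable)
  filter_upwards [ae_restrict_mem measurableSet_Ioi] with x hx
  have hx0 : (0:ℝ) ≤ x := le_of_lt hx
  rw [Real.norm_eq_abs, Pi.mul_apply, abs_of_nonneg (mul_nonneg (g_nonneg hx0) (exp_pos _).le)]
  have := g_le_quarter hx0
  have hexp : rexp (-1 * x) = rexp (-x) := by norm_num
  rw [hexp]
  exact mul_le_mul_of_nonneg_right this (exp_pos _).le

lemma chord1 {x : ℝ} (h1 : (0:ℝ) ≤ x) (h2 : x ≤ 1) : 0 + (1/4) * x ≤ g x := by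
  unfold g
  rw [le_div_iff₀ (by positivity)]
  nlinarith [mul_nonneg (mul_nonneg h1 (by linarith : (0:ℝ) ≤ 1 - x)) (by linarith : (0:ℝ) ≤ x + 3)]

lemma chord2 {x : ℝ} (h1 : (1:ℝ) ≤ x) (h2 : x ≤ 2) : 5/18 + (-1/36) * x ≤ g x := by
  unfold g
  rw [le_div_iff₀ (by positivity)]
  nlinarith [mul_nonneg (mul_nonneg (sub_nonneg.mpr h1) (sub_nonneg.mpr h2)) (by linarith : (0:ℝ) ≤ 5 - x)]

lemma chord3 {x : ℝ} (h1 : (2:ℝ) ≤ x) (h2 : x ≤ 3) : 3/16 + 0 * x ≤ g x := by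
  unfold g
  rw [le_div_iff₀ (by positivity)]
  nlinarith [mul_nonneg (by linarith : (0:ℝ) ≤ 3 * x - 1) (sub_nonneg.mpr h2)]

lemma chord4 {x : ℝ} (h1 : (3:ℝ) ≤ x) (h2 : x ≤ 4) : 4/25 + 0 * x ≤ g x := by
  unfold g
  rw [le_div_iff₀ (by positivity)]
  nlinarith [mul_nonneg (by linarith : (0:ℝ) ≤ 4 * x - 1) (sub_nonneg.mpr h2)]

lemma piece_bound (a b l r : ℝ) (hl : 0 ≤ l) (hlr : l ≤ r)
    (hch : ∀ x ∈ Icc l r, a + b * x ≤ g x) :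
    (a + b + b * l) * rexp (-l) - (a + b + b * r) * rexp (-r)
      ≤ ∫ x in l..r, g x * rexp (-x) := by
  rw [← lin_exp a b l r]
  apply intervalIntegral.integral_mono_on hlr
    (Continuous.intervalIntegrable (by continuity) l r)
  · rw [intervalIntegrable_iff_integrableOn_Ioc_of_le hlr]
    exact integrableOn_g_exp.mono_set (fun x hx => lt_of_le_of_lt hl hx.1)
  · intro x hx
    exact mul_le_mul_of_nonneg_right (hch x hx) (exp_pos _).le


lemma ae_nonneg : ∀ᵐ x ∂(expMeasure 1), (0:ℝ) ≤ x := by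
  rw [ae_iff]
  have h : {x : ℝ | ¬ (0:ℝ) ≤ x} = Iio 0 := by ext x; simp
  rw [h, expMeasure_one, withDensity_apply _ measurableSet_Iio]
  have : ∀ᵐ x ∂(volume.restrict (Iio (0:ℝ))), ((Real.toNNReal (dens x) : ℝ≥0) : ℝ≥0∞) = 0 := by
    filter_upwards [ae_restrict_mem measurableSet_Iio] with x hx
    simp [dens, not_le.mpr (mem_Iio.mp hx)]
  rw [lintegral_congr_ae this]
  simp

lemma m_lower :
    (5:ℝ)/38 ≤ ∫ y in Ioi (0:ℝ), g y * rexp (-y) := by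
  have hIoc : ∫ y in Ioc (0:ℝ) 4, g y * rexp (-y) ≤ ∫ y in Ioi (0:ℝ), g y * rexp (-y) := by
    apply setIntegral_mono_set integrableOn_g_exp
    · filter_upwards [ae_restrict_mem measurableSet_Ioi] with x hx
      exact mul_nonneg (g_nonneg hx.le) (exp_pos _).le
    · exact HasSubset.Subset.eventuallyLE Ioc_subset_Ioi_self
  refine le_trans ?_ hIoc
  have hii : ∀ l r : ℝ, 0 ≤ l → 0 ≤ r → IntervalIntegrable (fun y => g y * rexp (-y)) volume l r := by
    intro l r hl hr
    rcases le_total l r with h | h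
    · rw [intervalIntegrable_iff_integrableOn_Ioc_of_le h]
      exact integrableOn_g_exp.mono_set (fun x hx => lt_of_le_of_lt hl hx.1)
    · have : IntervalIntegrable (fun y => g y * rexp (-y)) volume r l := by
        rw [intervalIntegrable_iff_integrableOn_Ioc_of_le h]
        exact integrableOn_g_exp.mono_set (fun x hx => lt_of_le_of_lt hr hx.1)
      exact this.symm
  have hsplit : ∫ y in Ioc (0:ℝ) 4, g y * rexp (-y)
      = (∫ y in (0:ℝ)..1, g y * rexp (-y)) + (∫ y in (1:ℝ)..2, g y * rexp (-y))
        + (∫ y in (2:ℝ)..3, g y * rexp (-y)) + (∫ y in (3:ℝ)..4, g y * rexp (-y)) := by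
    rw [← intervalIntegral.integral_of_le (by norm_num : (0:ℝ) ≤ 4)]
    rw [← intervalIntegral.integral_add_adjacent_intervals (hii 0 1 le_rfl (by norm_num)) (hii 1 4 (by norm_num) (by norm_num))]
    rw [← intervalIntegral.integral_add_adjacent_intervals (hii 1 2 (by norm_num) (by norm_num)) (hii 2 4 (by norm_num) (by norm_num))]
    rw [← intervalIntegral.integral_add_adjacent_intervals (hii 2 3 (by norm_num) (by norm_num)) (hii 3 4 (by norm_num) (by norm_num))]
    ring
  rw [hsplit]
  have p1 := piece_bound 0 (1/4) 0 1 le_rfl (by norm_num) (fun x hx => chord1 hx.1 hx.2)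
  have p2 := piece_bound (5/18) (-1/36) 1 2 (by norm_num) (by norm_num) (fun x hx => chord2 hx.1 hx.2)
  have p3 := piece_bound (3/16) 0 2 3 (by norm_num) (by norm_num) (fun x hx => chord3 hx.1 hx.2)
  have p4 := piece_bound (4/25) 0 3 4 (by norm_num) (by norm_num) (fun x hx => chord4 hx.1 hx.2)
  have hu1 : rexp (-1) < 0.368 := by
    have h := Real.exp_one_gt_d9
    rw [show (-1:ℝ) = -(1:ℝ) by norm_num, Real.exp_neg]
    rw [inv_lt_comm₀ (exp_pos _) (by norm_num)]
    nlinarith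
  have hu0 : (0:ℝ) < rexp (-1) := exp_pos _
  have h2 : rexp (-2) = rexp (-1) * rexp (-1) := by rw [← Real.exp_add]; norm_num
  have h3 : rexp (-3) = rexp (-1) * rexp (-1) * rexp (-1) := by rw [← Real.exp_add, ← Real.exp_add]; norm_num
  have h4 : rexp (-4) = rexp (-1) * rexp (-1) * rexp (-1) * rexp (-1) := by
    rw [← Real.exp_add, ← Real.exp_add, ← Real.exp_add]; norm_num
  simp only [neg_zero, Real.exp_zero, h2, h3, h4] at p1 p2 p3 p4
  set u := rexp (-1) with hu
  have b2 : u * u ≤ 0.368 * 0.368 := by nlinarith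
  have b3 : u * u * u ≤ 0.368 * 0.368 * 0.368 := by nlinarith
  have b4 : u * u * u * u ≤ 0.368 * 0.368 * 0.368 * 0.368 := by nlinarith
  nlinarith [p1, p2, p3, p4, b2, b3, b4]

lemma integrable_g : Integrable g (expMeasure 1) := by
  have : IsProbabilityMeasure (expMeasure 1) := isProbabilityMeasure_expMeasure one_pos
  apply Integrable.mono' (integrable_const (1/4 : ℝ)) meas_g.aestronglyMeasurable
  filter_upwards [ae_nonneg] with x hx
  rw [Real.norm_eq_abs, abs_of_nonneg (g_nonneg hx)]
  exact g_le_quarter hx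

end SLNRAux


/-- Let `X ~ Exp(1)` and `g(x) = x/(x+1)²`. The variance of the normalized
SLNR gain `g(X)/E[g(X)]` (whose mean is `1`) is strictly smaller than the variance of `X`,
which equals `1`. -/
theorem slnr_gain_smaller_variance :
    (∫ x, (x - 1) ^ 2 ∂(expMeasure 1)) = 1 ∧
    (∫ x, ((x / (x + 1) ^ 2) / (∫ y, y / (y + 1) ^ 2 ∂(expMeasure 1)) - 1) ^ 2
        ∂(expMeasure 1)) < 1 := by
  have : IsProbabilityMeasure (expMeasure 1) := isProbabilityMeasure_expMeasure one_pos
  constructor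
  · rw [SLNRAux.integral_expMeasure (fun x => (x - 1) ^ 2)]
    exact SLNRAux.integral_sq_exp
  · set M : ℝ := ∫ y, y / (y + 1) ^ 2 ∂(expMeasure 1) with hM
    have hMg : M = ∫ y, SLNRAux.g y ∂(expMeasure 1) := rfl
    have hMval : M = ∫ y in Ioi (0:ℝ), SLNRAux.g y * rexp (-y) := by
      rw [hMg, SLNRAux.integral_expMeasure]
    have hMlow : (5:ℝ)/38 ≤ M := by rw [hMval]; exact SLNRAux.m_lower
    have hM0 : (0:ℝ) < M := lt_of_lt_of_le (by norm_num) hMlow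
    have hpt : ∀ᵐ x ∂(expMeasure 1),
        (SLNRAux.g x / M - 1) ^ 2 ≤ 1 - (1/10) * (SLNRAux.g x / M) := by
      filter_upwards [SLNRAux.ae_nonneg] with x hx
      have h1 : 0 ≤ SLNRAux.g x / M := div_nonneg (SLNRAux.g_nonneg hx) hM0.le
      have h2 : SLNRAux.g x / M ≤ 19/10 := by
        rw [div_le_iff₀ hM0]
        calc SLNRAux.g x ≤ 1/4 := SLNRAux.g_le_quarter hx
        _ ≤ 19/10 * M := by nlinarith
      nlinarith
    have hint_rhs : Integrable (fun x => 1 - (1/10) * (SLNRAux.g x / M)) (expMeasure 1) := by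
      apply Integrable.sub (integrable_const 1)
      exact ((SLNRAux.integrable_g.div_const M).const_mul (1/10))
    have hint_lhs : Integrable (fun x => (SLNRAux.g x / M - 1) ^ 2) (expMeasure 1) := by
      apply Integrable.mono' hint_rhs
      · exact (((SLNRAux.meas_g.div_const M).sub_const 1).pow_const 2).aestronglyMeasurable
      · filter_upwards [hpt] with x hx
        rw [Real.norm_eq_abs, abs_of_nonneg (sq_nonneg _)]
        exact hx
    have hle := integral_mono_ae hint_lhs hint_rhs hpt
    have hrhs : ∫ x, (1 - (1/10) * (SLNRAux.g x / M)) ∂(expMeasure 1) = 9/10 := by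
      rw [integral_sub (integrable_const 1) ((SLNRAux.integrable_g.div_const M).const_mul (1/10))]
      rw [integral_const]
      simp only [measure_univ, ENNReal.toReal_one, smul_eq_mul, one_mul]
      rw [integral_const_mul, integral_div, ← hMg, div_self hM0.ne']
      norm_num
    calc ∫ x, ((x / (x + 1) ^ 2) / M - 1) ^ 2 ∂(expMeasure 1)
        = ∫ x, (SLNRAux.g x / M - 1) ^ 2 ∂(expMeasure 1) := rfl
      _ ≤ 9/10 := by rw [← hrhs]; exact hle
      _ < 1 := by norm_num
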